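/- A graph G is a split graph if and only if C_4, the complement of C_4, and C_5 are forbidden as induced subgraphs of G. -/

import Mathlib

open SimpleGraph

universe u

/-- `H` is forbidden as an induced subgraph of `G`: no induced subgraph of `G`
is isomorphic to `H`. -/
def ForbiddenIn {W : Type*} {V : Type*} (H : SimpleGraph W) (G : SimpleGraph V) : Prop :=
  ¬ ∃ f : W ↪ V, ∀ u v, G.Adj (f u) (f v) ↔ H.Adj u v

/-- The chair: vertices `0,1,2,3,4` with exactly the edges `01, 12, 23, 24`. -/
def chair : SimpleGraph (Fin 5) :=
  SimpleGraph.fromRel (fun a b =>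
    (a = 0 ∧ b = 1) ∨ (a = 1 ∧ b = 2) ∨ (a = 2 ∧ b = 3) ∨ (a = 2 ∧ b = 4))

/-- `C₄`, `C₄`'s complement, `C₅`, the chair and the co-chair are all forbidden in `G`. -/
def FiveForbidden {V : Type*} (G : SimpleGraph V) : Prop :=
  ForbiddenIn (cycleGraph 4) G ∧ ForbiddenIn (cycleGraph 4)ᶜ G ∧
  ForbiddenIn (cycleGraph 5) G ∧ ForbiddenIn chair G ∧ ForbiddenIn chairᶜ G

/-- `G` is an `{S, K}`-split graph: `V(G)` is the disjoint union of the stable set `S`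
and the clique `K`. -/
def IsSplitPartition {V : Type*} (G : SimpleGraph V) (S K : Set V) : Prop :=
  (∀ v, v ∈ S ∨ v ∈ K) ∧ Disjoint S K ∧
  (∀ a ∈ S, ∀ b ∈ S, ¬ G.Adj a b) ∧
  (∀ a ∈ K, ∀ b ∈ K, a ≠ b → G.Adj a b)

/-- `a b b' a'` is an induced path `P₄` in `G`: the four vertices are distinct and the
only edges among them are `ab`, `bb'`, `b'a'`. -/
def IsInducedP4 {V : Type*} (G : SimpleGraph V) (a b b' a' : V) : Prop :=
  a ≠ b ∧ a ≠ b' ∧ a ≠ a' ∧ b ≠ b' ∧ b ≠ a' ∧ b' ≠ a' ∧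
  G.Adj a b ∧ G.Adj b b' ∧ G.Adj b' a' ∧
  ¬ G.Adj a b' ∧ ¬ G.Adj a a' ∧ ¬ G.Adj b a'

/-- `G` is an `{S, K}`-threshold graph, following the paper's Definition 2.
Here `X i` stands for `X_{i+1}` (real indices `1,…,n+1`) and `A i` stands for `A_i`
(real indices `0,…,n`), so the condition `1 ≤ j ≤ i ≤ n` on real indices becomes
`(j : ℕ) < (i : ℕ)` on the `Fin (n+1)` indices. -/
def IsSKThreshold {V : Type*} (G : SimpleGraph V) (S K : Set V) : Prop :=
  ∃ (n : ℕ) (X A : Fin (n + 1) → Set V),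
    (∀ i j, i ≠ j → Disjoint (X i) (X j)) ∧
    (∀ i j, i ≠ j → Disjoint (A i) (A j)) ∧
    (∀ i j, Disjoint (X i) (A j)) ∧
    K = ⋃ i, X i ∧
    S = ⋃ i, A i ∧
    (∀ v, v ∈ S ∨ v ∈ K) ∧
    (∀ i : Fin (n + 1), (i : ℕ) < n → (X i).Nonempty) ∧
    (∀ i : Fin (n + 1), 0 < (i : ℕ) → (A i).Nonempty) ∧
    (∀ u v, G.Adj u v ↔
      (u ∈ K ∧ v ∈ K ∧ u ≠ v) ∨
      (∃ i j : Fin (n + 1), (j : ℕ) < (i : ℕ) ∧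
        ((u ∈ A i ∧ v ∈ X j) ∨ (v ∈ A i ∧ u ∈ X j))))

/-- The allowed cross (stable-to-clique) edges of a comb.  Indexing conventions:
`A i = A_i` (`0,…,n`), `X i = X_{i+1}` (`1,…,n+1`), `M k = M_{k+1}` (`1,…,l`),
`Y k = Y_{k+1}` (`1,…,l+2`).  `s` is the stable-side endpoint, `x` the clique-side one. -/
def CombCross {V : Type*} (n l k0 : ℕ) (A X : Fin (n + 1) → Set V)
    (M : Fin l → Set V) (Y : Fin (l + 2) → Set V) (s x : V) : Prop :=
  (∃ i j : Fin (n + 1), (j : ℕ) < (i : ℕ) ∧ s ∈ A i ∧ x ∈ X j) ∨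
  ((∃ i, s ∈ A i) ∧ (∃ j, x ∈ Y j)) ∨
  (∃ k : Fin l, s ∈ M k ∧ x ∈ Y ⟨(k : ℕ), by omega⟩) ∨
  (∃ (k1 : Fin l) (k2 : Fin (l + 2)), (k1 : ℕ) < (k2 : ℕ) ∧ (k2 : ℕ) < l ∧
    s ∈ M k1 ∧ x ∈ Y k2) ∨
  (∃ k : Fin l, (k : ℕ) + 1 ≤ k0 ∧ s ∈ M k ∧ x ∈ Y ⟨l, by omega⟩)

/-- `G` is an `{S, K}`-comb, following the paper's Definition 3.
Indexing conventions as in `CombCross`; in particular `Y 0 = X 0` encodes `Y_1 = X_1`,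
`Y ⟨l,_⟩` is `Y_{l+1}` and `Y ⟨l+1,_⟩` is `Y_{l+2}`. -/
def IsSKComb {V : Type*} (G : SimpleGraph V) (S K : Set V) : Prop :=
  ∃ (n l : ℕ) (A X : Fin (n + 1) → Set V) (M : Fin l → Set V)
    (Y : Fin (l + 2) → Set V) (k0 : ℕ),
    -- (1) the sets of the comb, `Y_1 = X_1`, pairwise disjointness of the sets
    Y 0 = X 0 ∧
    (∀ i j, i ≠ j → Disjoint (A i) (A j)) ∧
    (∀ i j, i ≠ j → Disjoint (X i) (X j)) ∧
    (∀ i j, i ≠ j → Disjoint (M i) (M j)) ∧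
    (∀ i j, i ≠ j → Disjoint (Y i) (Y j)) ∧
    (∀ i j, Disjoint (A i) (X j)) ∧
    (∀ i j, Disjoint (A i) (M j)) ∧
    (∀ i j, Disjoint (A i) (Y j)) ∧
    (∀ i j, Disjoint (M i) (X j)) ∧
    (∀ i j, Disjoint (M i) (Y j)) ∧
    (∀ (i : Fin (n + 1)) (j : Fin (l + 2)), 0 < (j : ℕ) → Disjoint (X i) (Y j)) ∧
    -- (2) `S = A ∪ M` is stable and (3) `K = X ∪ Y` is a clique, and they partition `V(G)`
    S = (⋃ i, A i) ∪ (⋃ k, M k) ∧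
    K = (⋃ i, X i) ∪ (⋃ k, Y k) ∧
    (∀ v, v ∈ S ∨ v ∈ K) ∧
    Disjoint S K ∧
    (∀ a ∈ S, ∀ b ∈ S, ¬ G.Adj a b) ∧
    (∀ a ∈ K, ∀ b ∈ K, a ≠ b → G.Adj a b) ∧
    -- (4) for `1 ≤ j ≤ i ≤ n`, `G[A_i ∪ X_j]` is a complete split graph
    (∀ i j : Fin (n + 1), (j : ℕ) < (i : ℕ) → ∀ a ∈ A i, ∀ x ∈ X j, G.Adj a x) ∧
    -- (5) `G[A ∪ Y]` is a complete split graph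
    (∀ i, ∀ a ∈ A i, ∀ j, ∀ y ∈ Y j, G.Adj a y) ∧
    -- (6) for `1 ≤ i ≤ l`, `G[Y_i ∪ M_i]` is a perfect split graph
    (∀ k : Fin l,
      (∀ y ∈ Y ⟨(k : ℕ), by omega⟩, ∃! m, m ∈ M k ∧ G.Adj y m) ∧
      (∀ m ∈ M k, ∃! y, y ∈ Y ⟨(k : ℕ), by omega⟩ ∧ G.Adj y m)) ∧
    -- (7) for `1 ≤ i < j ≤ l`, `G[Y_j ∪ M_i]` is a complete split graph
    (∀ (k1 : Fin l) (k2 : Fin (l + 2)), (k1 : ℕ) < (k2 : ℕ) → (k2 : ℕ) < l →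
      ∀ m ∈ M k1, ∀ y ∈ Y k2, G.Adj m y) ∧
    -- (8) `∃ 1 ≤ k0 ≤ l` such that for all `i ≤ k0`, `G[Y_{l+1} ∪ M_i]` is complete split
    (1 ≤ k0 ∧ k0 ≤ l ∧
      ∀ k : Fin l, (k : ℕ) + 1 ≤ k0 → ∀ m ∈ M k, ∀ y ∈ Y ⟨l, by omega⟩, G.Adj m y) ∧
    -- (9) only `X_{n+1}`, `Y_{l+2}`, `Y_{l+1}`, `M_l`, `A_0` may be empty
    (∀ i : Fin (n + 1), (i : ℕ) < n → (X i).Nonempty) ∧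
    (∀ i : Fin (n + 1), 0 < (i : ℕ) → (A i).Nonempty) ∧
    (∀ k : Fin l, (k : ℕ) + 1 < l → (M k).Nonempty) ∧
    (∀ k : Fin (l + 2), 0 < (k : ℕ) → (k : ℕ) < l → (Y k).Nonempty) ∧
    -- (10) these are the only edges of `G`
    (∀ u v, G.Adj u v → (u ∈ K ∧ v ∈ K) ∨
      CombCross n l k0 A X M Y u v ∨ CombCross n l k0 A X M Y v u)

/-- `G` is a comb. -/
def IsComb {V : Type*} (G : SimpleGraph V) : Prop :=
  ∃ S K : Set V, IsSKComb G S K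

section Helpers
variable {V : Type u} {G : SimpleGraph V}

lemma mk_c4 (hF : ForbiddenIn (cycleGraph 4) G)
    {a b c d : V} (hac : a ≠ c) (hbd : b ≠ d)
    (hab : G.Adj a b) (hbc : G.Adj b c) (hcd : G.Adj c d) (hda : G.Adj d a)
    (nac : ¬ G.Adj a c) (nbd : ¬ G.Adj b d) : False := by
  have h1 : a ≠ b := hab.ne
  have h2 : b ≠ c := hbc.ne
  have h3 : c ≠ d := hcd.ne
  have h4 : d ≠ a := hda.ne
  apply hF
  have hinj : Function.Injective ![a, b, c, d] := by
    intro u v huv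
    by_contra hne
    fin_cases u <;> fin_cases v <;> simp_all
  refine ⟨⟨![a, b, c, d], hinj⟩, ?_⟩
  intro u v
  fin_cases u <;> fin_cases v <;>
    first
      | exact iff_of_false (G.loopless.irrefl _) (by decide)
      | exact iff_of_true hab (by decide)
      | exact iff_of_true hab.symm (by decide)
      | exact iff_of_true hbc (by decide)
      | exact iff_of_true hbc.symm (by decide)
      | exact iff_of_true hcd (by decide)
      | exact iff_of_true hcd.symm (by decide)
      | exact iff_of_true hda (by decide)
      | exact iff_of_true hda.symm (by decide)
      | exact iff_of_false nac (by decide)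
      | exact iff_of_false (fun h => nac h.symm) (by decide)
      | exact iff_of_false nbd (by decide)
      | exact iff_of_false (fun h => nbd h.symm) (by decide)

lemma mk_2k2 (hF : ForbiddenIn (cycleGraph 4)ᶜ G)
    {a b c d : V} (hab : a ≠ b) (hbc : b ≠ c) (hcd : c ≠ d) (hda : d ≠ a)
    (aac : G.Adj a c) (abd : G.Adj b d)
    (nab : ¬ G.Adj a b) (nbc : ¬ G.Adj b c) (ncd : ¬ G.Adj c d) (nda : ¬ G.Adj d a) :
    False := by
  have h1 : a ≠ c := aac.ne
  have h2 : b ≠ d := abd.ne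
  apply hF
  have hinj : Function.Injective ![a, b, c, d] := by
    intro u v huv
    by_contra hne
    fin_cases u <;> fin_cases v <;> simp_all
  refine ⟨⟨![a, b, c, d], hinj⟩, ?_⟩
  intro u v
  fin_cases u <;> fin_cases v <;>
    first
      | exact iff_of_false (G.loopless.irrefl _) (by decide)
      | exact iff_of_true aac (by decide)
      | exact iff_of_true aac.symm (by decide)
      | exact iff_of_true abd (by decide)
      | exact iff_of_true abd.symm (by decide)
      | exact iff_of_false nab (by decide)
      | exact iff_of_false (fun h => nab h.symm) (by decide)
      | exact iff_of_false nbc (by decide)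
      | exact iff_of_false (fun h => nbc h.symm) (by decide)
      | exact iff_of_false ncd (by decide)
      | exact iff_of_false (fun h => ncd h.symm) (by decide)
      | exact iff_of_false nda (by decide)
      | exact iff_of_false (fun h => nda h.symm) (by decide)

lemma mk_c5 (hF : ForbiddenIn (cycleGraph 5) G)
    {a b c d e : V} (hac : a ≠ c) (had : a ≠ d) (hbd : b ≠ d) (hbe : b ≠ e) (hce : c ≠ e)
    (aab : G.Adj a b) (abc : G.Adj b c) (acd : G.Adj c d) (ade : G.Adj d e)
    (aea : G.Adj e a)
    (nac : ¬ G.Adj a c) (nad : ¬ G.Adj a d) (nbd : ¬ G.Adj b d) (nbe : ¬ G.Adj b e)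
    (nce : ¬ G.Adj c e) : False := by
  have h1 : a ≠ b := aab.ne
  have h2 : b ≠ c := abc.ne
  have h3 : c ≠ d := acd.ne
  have h4 : d ≠ e := ade.ne
  have h5 : e ≠ a := aea.ne
  apply hF
  have hinj : Function.Injective ![a, b, c, d, e] := by
    intro u v huv
    by_contra hne
    fin_cases u <;> fin_cases v <;> simp_all
  refine ⟨⟨![a, b, c, d, e], hinj⟩, ?_⟩
  intro u v
  fin_cases u <;> fin_cases v <;>
    first
      | exact iff_of_false (G.loopless.irrefl _) (by decide)
      | exact iff_of_true aab (by decide)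
      | exact iff_of_true aab.symm (by decide)
      | exact iff_of_true abc (by decide)
      | exact iff_of_true abc.symm (by decide)
      | exact iff_of_true acd (by decide)
      | exact iff_of_true acd.symm (by decide)
      | exact iff_of_true ade (by decide)
      | exact iff_of_true ade.symm (by decide)
      | exact iff_of_true aea (by decide)
      | exact iff_of_true aea.symm (by decide)
      | exact iff_of_false nac (by decide)
      | exact iff_of_false (fun h => nac h.symm) (by decide)
      | exact iff_of_false nad (by decide)
      | exact iff_of_false (fun h => nad h.symm) (by decide)
      | exact iff_of_false nbd (by decide)
      | exact iff_of_false (fun h => nbd h.symm) (by decide)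
      | exact iff_of_false nbe (by decide)
      | exact iff_of_false (fun h => nbe h.symm) (by decide)
      | exact iff_of_false nce (by decide)
      | exact iff_of_false (fun h => nce h.symm) (by decide)

lemma double_sum_insert [Fintype V] [DecidableEq V] [DecidableRel G.Adj]
    {T : Finset V} {r : V} (hr : r ∉ T) :
    (∑ v ∈ insert r T, ∑ w ∈ insert r T, if G.Adj v w then (1 : ℕ) else 0) =
      2 * (∑ w ∈ T, if G.Adj r w then (1 : ℕ) else 0) +
        ∑ v ∈ T, ∑ w ∈ T, if G.Adj v w then (1 : ℕ) else 0 := by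
  have hin : ∀ v : V, (∑ w ∈ insert r T, if G.Adj v w then (1 : ℕ) else 0) =
      (if G.Adj v r then (1 : ℕ) else 0) + ∑ w ∈ T, if G.Adj v w then (1 : ℕ) else 0 :=
    fun v => Finset.sum_insert hr
  rw [Finset.sum_insert hr, hin r, if_neg (G.loopless.irrefl r),
    Finset.sum_congr rfl (fun v _ => hin v), Finset.sum_add_distrib]
  have : (∑ v ∈ T, if G.Adj v r then (1 : ℕ) else 0) =
      ∑ w ∈ T, if G.Adj r w then (1 : ℕ) else 0 :=
    Finset.sum_congr rfl (fun v _ => if_congr (G.adj_comm v r) rfl rfl)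
  rw [this]
  ring



section Main
variable {V : Type u} {G : SimpleGraph V}

lemma split_forward {S K : Set V} (h : IsSplitPartition G S K) :
    ForbiddenIn (cycleGraph 4) G ∧ ForbiddenIn (cycleGraph 4)ᶜ G ∧
      ForbiddenIn (cycleGraph 5) G := by
  obtain ⟨hcov, hdisj, hS, hK⟩ := h
  refine ⟨?_, ?_, ?_⟩
  · rintro ⟨f, hf⟩
    have hne : ∀ i j : Fin 4, i ≠ j → f i ≠ f j := fun i j h hh => h (f.injective hh)
    have a01 : G.Adj (f 0) (f 1) := (hf 0 1).mpr (by decide)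
    have a12 : G.Adj (f 1) (f 2) := (hf 1 2).mpr (by decide)
    have a23 : G.Adj (f 2) (f 3) := (hf 2 3).mpr (by decide)
    have a30 : G.Adj (f 3) (f 0) := (hf 3 0).mpr (by decide)
    have n02 : ¬ G.Adj (f 0) (f 2) := fun hh => absurd ((hf 0 2).mp hh) (by decide)
    have n13 : ¬ G.Adj (f 1) (f 3) := fun hh => absurd ((hf 1 3).mp hh) (by decide)
    have hK13 : f 1 ∈ K → f 3 ∈ K → False := fun h1 h3 =>
      n13 (hK _ h1 _ h3 (hne 1 3 (by decide)))
    rcases hcov (f 0) with h0S | h0K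
    · have h1K : f 1 ∈ K := (hcov (f 1)).resolve_left (fun h1S => hS _ h0S _ h1S a01)
      have h3K : f 3 ∈ K := (hcov (f 3)).resolve_left (fun h3S => hS _ h3S _ h0S a30)
      exact hK13 h1K h3K
    · have h2S : f 2 ∈ S := (hcov (f 2)).elim id
        (fun h2K => absurd (hK _ h0K _ h2K (hne 0 2 (by decide))) n02)
      have h1K : f 1 ∈ K := (hcov (f 1)).resolve_left (fun h1S => hS _ h1S _ h2S a12)
      have h3K : f 3 ∈ K := (hcov (f 3)).resolve_left (fun h3S => hS _ h2S _ h3S a23)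
      exact hK13 h1K h3K
  · rintro ⟨f, hf⟩
    have hne : ∀ i j : Fin 4, i ≠ j → f i ≠ f j := fun i j h hh => h (f.injective hh)
    have a02 : G.Adj (f 0) (f 2) := (hf 0 2).mpr (by decide)
    have a13 : G.Adj (f 1) (f 3) := (hf 1 3).mpr (by decide)
    have n01 : ¬ G.Adj (f 0) (f 1) := fun hh => absurd ((hf 0 1).mp hh) (by decide)
    have n12 : ¬ G.Adj (f 1) (f 2) := fun hh => absurd ((hf 1 2).mp hh) (by decide)
    have n23 : ¬ G.Adj (f 2) (f 3) := fun hh => absurd ((hf 2 3).mp hh) (by decide)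
    have n30 : ¬ G.Adj (f 3) (f 0) := fun hh => absurd ((hf 3 0).mp hh) (by decide)
    rcases hcov (f 0) with h0S | h0K
    · have h2K : f 2 ∈ K := (hcov (f 2)).resolve_left (fun h2S => hS _ h0S _ h2S a02)
      have h1S : f 1 ∈ S := (hcov (f 1)).elim id
        (fun h1K => absurd (hK _ h1K _ h2K (hne 1 2 (by decide))) n12)
      have h3S : f 3 ∈ S := (hcov (f 3)).elim id
        (fun h3K => absurd (hK _ h2K _ h3K (hne 2 3 (by decide))) n23)
      exact hS _ h1S _ h3S a13
    · have h1S : f 1 ∈ S := (hcov (f 1)).elim id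
        (fun h1K => absurd (hK _ h0K _ h1K (hne 0 1 (by decide))) n01)
      have h3S : f 3 ∈ S := (hcov (f 3)).elim id
        (fun h3K => absurd (hK _ h3K _ h0K (hne 3 0 (by decide))) n30)
      exact hS _ h1S _ h3S a13
  · rintro ⟨f, hf⟩
    have hne : ∀ i j : Fin 5, i ≠ j → f i ≠ f j := fun i j h hh => h (f.injective hh)
    have a01 : G.Adj (f 0) (f 1) := (hf 0 1).mpr (by decide)
    have a12 : G.Adj (f 1) (f 2) := (hf 1 2).mpr (by decide)
    have a23 : G.Adj (f 2) (f 3) := (hf 2 3).mpr (by decide)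
    have a40 : G.Adj (f 4) (f 0) := (hf 4 0).mpr (by decide)
    have n02 : ¬ G.Adj (f 0) (f 2) := fun hh => absurd ((hf 0 2).mp hh) (by decide)
    have n13 : ¬ G.Adj (f 1) (f 3) := fun hh => absurd ((hf 1 3).mp hh) (by decide)
    have n14 : ¬ G.Adj (f 1) (f 4) := fun hh => absurd ((hf 1 4).mp hh) (by decide)
    have h0K : f 0 ∈ K := (hcov (f 0)).resolve_left (fun h0S => by
      have h1K : f 1 ∈ K := (hcov (f 1)).resolve_left (fun h1S => hS _ h0S _ h1S a01)
      have h4K : f 4 ∈ K := (hcov (f 4)).resolve_left (fun h4S => hS _ h4S _ h0S a40)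
      exact n14 (hK _ h1K _ h4K (hne 1 4 (by decide))))
    have h2K : f 2 ∈ K := (hcov (f 2)).resolve_left (fun h2S => by
      have h1K : f 1 ∈ K := (hcov (f 1)).resolve_left (fun h1S => hS _ h1S _ h2S a12)
      have h3K : f 3 ∈ K := (hcov (f 3)).resolve_left (fun h3S => hS _ h2S _ h3S a23)
      exact n13 (hK _ h1K _ h3K (hne 1 3 (by decide))))
    exact n02 (hK _ h0K _ h2K (hne 0 2 (by decide)))


lemma split_reverse [Fintype V]
    (hC4 : ForbiddenIn (cycleGraph 4) G) (hC4c : ForbiddenIn (cycleGraph 4)ᶜ G)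
    (hC5 : ForbiddenIn (cycleGraph 5) G) :
    ∃ S K : Set V, IsSplitPartition G S K := by
  classical
  have hCne : ((Finset.univ : Finset (Finset V)).filter
      (fun K => ∀ a ∈ K, ∀ b ∈ K, a ≠ b → G.Adj a b)).Nonempty :=
    ⟨∅, by simp⟩
  obtain ⟨K1, hK1mem, hK1max⟩ := Finset.exists_max_image _ Finset.card hCne
  have hK1clq := (Finset.mem_filter.mp hK1mem).2
  have hC2ne : (((Finset.univ : Finset (Finset V)).filter
      (fun K => (∀ a ∈ K, ∀ b ∈ K, a ≠ b → G.Adj a b) ∧ K.card = K1.card))).Nonempty :=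
    ⟨K1, Finset.mem_filter.mpr ⟨Finset.mem_univ _, hK1clq, rfl⟩⟩
  obtain ⟨K, hKmem, hKmin⟩ := Finset.exists_min_image _
    (fun K => ∑ v ∈ Kᶜ, ∑ w ∈ Kᶜ, if G.Adj v w then (1 : ℕ) else 0) hC2ne
  obtain ⟨hclq, hcard⟩ := (Finset.mem_filter.mp hKmem).2
  -- maximality of K
  have hmaxadj : ∀ x, x ∉ K → ∃ z ∈ K, ¬ G.Adj x z := by
    intro x hx
    by_contra hcon
    push_neg at hcon
    have hclq' : ∀ a ∈ insert x K, ∀ b ∈ insert x K, a ≠ b → G.Adj a b := by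
      intro a ha b hb hne
      rcases Finset.mem_insert.mp ha with ha' | haK <;>
        rcases Finset.mem_insert.mp hb with hb' | hbK
      · exact absurd (ha'.trans hb'.symm) hne
      · subst ha'; exact hcon b hbK
      · subst hb'; exact (hcon a haK).symm
      · exact hclq a haK b hbK hne
    have hle := hK1max _ (Finset.mem_filter.mpr ⟨Finset.mem_univ _, hclq'⟩)
    rw [Finset.card_insert_of_notMem hx] at hle
    omega
  -- the key auxiliary step
  have aux : ∀ x y z : V, x ∉ K → y ∉ K → G.Adj x y → z ∈ K →
      ¬ G.Adj x z → ¬ G.Adj y z → (∀ c ∈ K, ¬ G.Adj x c → c = z) → False := by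
    intro x y z hx hy hxy hzK hxz hyz hall
    have hxnez : x ≠ z := fun h => hx (by rw [h]; exact hzK)
    have hynez : y ≠ z := fun h => hy (by rw [h]; exact hzK)
    have hxK'e : x ∉ K.erase z := fun h => hx (Finset.mem_of_mem_erase h)
    have hK'clq : ∀ a ∈ insert x (K.erase z), ∀ b ∈ insert x (K.erase z),
        a ≠ b → G.Adj a b := by
      intro a ha b hb hne
      rcases Finset.mem_insert.mp ha with ha' | haE <;>
        rcases Finset.mem_insert.mp hb with hb' | hbE
      · exact absurd (ha'.trans hb'.symm) hne
      · subst ha'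
        obtain ⟨hbz, hbK⟩ := Finset.mem_erase.mp hbE
        by_contra hnadj
        exact hbz (hall b hbK hnadj)
      · subst hb'
        obtain ⟨haz, haK⟩ := Finset.mem_erase.mp haE
        by_contra hnadj
        exact haz (hall a haK (fun h => hnadj h.symm))
      · exact hclq a (Finset.mem_of_mem_erase haE) b (Finset.mem_of_mem_erase hbE) hne
    have hK'card : (insert x (K.erase z)).card = K.card := by
      rw [Finset.card_insert_of_notMem hxK'e, Finset.card_erase_of_mem hzK]
      have : 0 < K.card := Finset.card_pos.mpr ⟨z, hzK⟩
      omega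
    have hE := hKmin (insert x (K.erase z))
      (Finset.mem_filter.mpr ⟨Finset.mem_univ _, hK'clq, by rw [hK'card, hcard]⟩)
    have hxT : x ∉ Kᶜ.erase x := Finset.notMem_erase _ _
    have hzT : z ∉ Kᶜ.erase x :=
      fun h => (Finset.mem_compl.mp (Finset.mem_of_mem_erase h)) hzK
    have hc1 : Kᶜ = insert x (Kᶜ.erase x) :=
      (Finset.insert_erase (Finset.mem_compl.mpr hx)).symm
    have hc2 : (insert x (K.erase z))ᶜ = insert z (Kᶜ.erase x) := by
      ext v
      simp only [Finset.mem_compl, Finset.mem_insert, Finset.mem_erase, not_or, not_and]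
      constructor
      · rintro ⟨hvx, hv⟩
        by_cases hvz : v = z
        · exact Or.inl hvz
        · exact Or.inr ⟨hvx, hv hvz⟩
      · rintro (rfl | ⟨hvx, hvK⟩)
        · exact ⟨fun h => hxnez h.symm, fun h => absurd rfl h⟩
        · exact ⟨hvx, fun _ => hvK⟩
    have hdle : (∑ w ∈ Kᶜ.erase x, if G.Adj x w then (1 : ℕ) else 0) ≤
        ∑ w ∈ Kᶜ.erase x, if G.Adj z w then (1 : ℕ) else 0 := by
      rw [hc1, hc2, double_sum_insert hxT, double_sum_insert hzT] at hE
      omega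
    have hyT : y ∈ Kᶜ.erase x := Finset.mem_erase.mpr ⟨hxy.ne', Finset.mem_compl.mpr hy⟩
    have hw : ∃ w ∈ Kᶜ.erase x, G.Adj z w ∧ ¬ G.Adj x w := by
      by_contra hcon
      push_neg at hcon
      have h1 : (∑ w ∈ Kᶜ.erase x, if G.Adj z w then (1 : ℕ) else 0) =
          ∑ w ∈ (Kᶜ.erase x).erase y, if G.Adj z w then (1 : ℕ) else 0 := by
        rw [← Finset.add_sum_erase _ _ hyT, if_neg (fun h => hyz h.symm), zero_add]
      have h2 : (∑ w ∈ Kᶜ.erase x, if G.Adj x w then (1 : ℕ) else 0) =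
          1 + ∑ w ∈ (Kᶜ.erase x).erase y, if G.Adj x w then (1 : ℕ) else 0 := by
        rw [← Finset.add_sum_erase _ _ hyT, if_pos hxy]
      have h3 : (∑ w ∈ (Kᶜ.erase x).erase y, if G.Adj z w then (1 : ℕ) else 0) ≤
          ∑ w ∈ (Kᶜ.erase x).erase y, if G.Adj x w then (1 : ℕ) else 0 := by
        refine Finset.sum_le_sum fun w hwm => ?_
        by_cases h : G.Adj z w
        · simp [h, hcon w (Finset.mem_of_mem_erase hwm) h]
        · simp [h]
      omega
    obtain ⟨w, hwT, hzw, hxw⟩ := hw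
    have hwK : w ∉ K := Finset.mem_compl.mp (Finset.mem_of_mem_erase hwT)
    have hwx : w ≠ x := (Finset.mem_erase.mp hwT).1
    have hwy : w ≠ y := fun h => hyz (G.symm.symm _ _ (by rw [← h]; exact hzw))
    by_cases hyw : G.Adj y w
    · obtain ⟨t, htK, hwt⟩ := hmaxadj w hwK
      have htz : t ≠ z := fun h => hwt (by rw [h]; exact hzw.symm)
      have hyt : ¬ G.Adj y t := by
        intro hyt
        exact mk_c4 hC4 (fun h => hwK (by rw [h]; exact htK)) hynez hyw.symm hyt
          (hclq t htK z hzK htz) hzw hwt hyz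
      have hxt : G.Adj x t := by
        by_contra hnxt
        exact htz (hall t htK hnxt)
      exact mk_c5 hC5 hwx.symm hxnez hynez (fun h => hy (by rw [h]; exact htK))
        (fun h => hwK (by rw [h]; exact htK)) hxy hyw hzw.symm (hclq z hzK t htK (Ne.symm htz))
        hxt.symm hxw hxz hyz hyt hwt
    · exact mk_2k2 hC4c hxnez (Ne.symm hynez) hwy.symm hwx hxy hzw hxz
        (fun h => hyz h.symm) hyw (fun h => hxw h.symm)
  -- assemble the split partition
  refine ⟨(↑K : Set V)ᶜ, (↑K : Set V), fun v => (em (v ∈ (↑K : Set V))).symm,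
    disjoint_compl_left, ?_, fun a ha b hb hne => hclq a ha b hb hne⟩
  intro a ha b hb hab
  have hA : a ∉ K := ha
  have hB : b ∉ K := hb
  obtain ⟨a1, ha1K, hax⟩ := hmaxadj a hA
  obtain ⟨b1, hb1K, hby⟩ := hmaxadj b hB
  have hz : ∃ z ∈ K, ¬ G.Adj a z ∧ ¬ G.Adj b z := by
    by_cases hya : G.Adj b a1
    · by_cases hxb : G.Adj a b1
      · exact (mk_c4 hC4 (fun h => hA (by rw [h]; exact ha1K)) (fun h => hB (by rw [h]; exact hb1K)) hab hya
          (hclq a1 ha1K b1 hb1K (fun h => hax (by rw [h]; exact hxb))) hxb.symm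
          hax hby).elim
      · exact ⟨b1, hb1K, hxb, hby⟩
    · exact ⟨a1, ha1K, hax, hya⟩
  obtain ⟨z, hzK, haz, hbz⟩ := hz
  have hsing : (∀ c ∈ K, ¬ G.Adj a c → c = z) ∨ (∀ c ∈ K, ¬ G.Adj b c → c = z) := by
    by_contra hcon
    push_neg at hcon
    obtain ⟨⟨p, hpK, hap, hpz⟩, ⟨q, hqK, hbq, hqz⟩⟩ := hcon
    by_cases hya : G.Adj b p
    · by_cases hxb : G.Adj a q
      · exact mk_c4 hC4 (fun h => hA (by rw [h]; exact hpK)) (fun h => hB (by rw [h]; exact hqK)) hab hya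
          (hclq p hpK q hqK (fun h => hap (by rw [h]; exact hxb))) hxb.symm hap hbq
      · exact mk_2k2 hC4c (fun h => hA (by rw [h]; exact hzK)) (fun h => hB (by rw [← h]; exact hzK))
          (fun h => hB (by rw [h]; exact hqK)) (fun h => hA (by rw [← h]; exact hqK))
          hab (hclq z hzK q hqK (Ne.symm hqz)) haz (fun h => hbz h.symm) hbq
          (fun h => hxb h.symm)
    · exact mk_2k2 hC4c (fun h => hA (by rw [h]; exact hzK)) (fun h => hB (by rw [← h]; exact hzK))
        (fun h => hB (by rw [h]; exact hpK)) (fun h => hA (by rw [← h]; exact hpK))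
        hab (hclq z hzK p hpK (Ne.symm hpz)) haz (fun h => hbz h.symm) hya
        (fun h => hap h.symm)
  rcases hsing with h | h
  · exact aux a b z hA hB hab hzK haz hbz h
  · exact aux b a z hB hA hab.symm hzK hbz haz h

end Main

/-- Földes–Hammer. -/
theorem stmt_4 {V : Type u} [Fintype V] (G : SimpleGraph V) :
    (∃ S K : Set V, IsSplitPartition G S K) ↔
      ForbiddenIn (cycleGraph 4) G ∧ ForbiddenIn (cycleGraph 4)ᶜ G ∧
        ForbiddenIn (cycleGraph 5) G := by
  constructor
  · rintro ⟨S, K, h⟩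
    exact split_forward h
  · rintro ⟨h1, h2, h3⟩
    exact split_reverse h1 h2 h3
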